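/- arXiv:2201.04572 — 3 statements merged into one kernel-verified Lean document; each statement's English description precedes it below -/
import Mathlib

section
/- The function f(x,y) = ln(1 + a/x + b/y) is convex on the domain x > 0, y > 0, for any constants a > 0 and b > 0. -/
open Real

/-- Per-term Hölder step: `u^t v^s ≤ A^t B^s * (t*u/A + s*v/B)`. -/
lemma aux_term {t s u v A B : ℝ} (ht : 0 ≤ t) (hs : 0 ≤ s) (hts : t + s = 1)
    (hu : 0 ≤ u) (hv : 0 ≤ v) (hA : 0 < A) (hB : 0 < B) :
    u ^ t * v ^ s ≤ A ^ t * B ^ s * (t * (u / A) + s * (v / B)) := by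
  have h := Real.geom_mean_le_arith_mean2_weighted ht hs
    (div_nonneg hu hA.le) (div_nonneg hv hB.le) hts
  have hApos : (0:ℝ) < A ^ t := Real.rpow_pos_of_pos hA t
  have hBpos : (0:ℝ) < B ^ s := Real.rpow_pos_of_pos hB s
  have key : (u / A) ^ t * (v / B) ^ s = u ^ t * v ^ s / (A ^ t * B ^ s) := by
    rw [Real.div_rpow hu hA.le, Real.div_rpow hv hB.le]
    field_simp
  rw [key] at h
  calc u ^ t * v ^ s = A ^ t * B ^ s * (u ^ t * v ^ s / (A ^ t * B ^ s)) := by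
        field_simp
    _ ≤ A ^ t * B ^ s * (t * (u / A) + s * (v / B)) := by
        exact mul_le_mul_of_nonneg_left h (by positivity)

/-- Three-term Hölder inequality. -/
lemma aux_holder3 {t s u₁ u₂ u₃ v₁ v₂ v₃ : ℝ} (ht : 0 ≤ t) (hs : 0 ≤ s) (hts : t + s = 1)
    (hu₁ : 0 ≤ u₁) (hu₂ : 0 ≤ u₂) (hu₃ : 0 ≤ u₃)
    (hv₁ : 0 ≤ v₁) (hv₂ : 0 ≤ v₂) (hv₃ : 0 ≤ v₃)
    (hA : 0 < u₁ + u₂ + u₃) (hB : 0 < v₁ + v₂ + v₃) :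
    u₁ ^ t * v₁ ^ s + u₂ ^ t * v₂ ^ s + u₃ ^ t * v₃ ^ s ≤
      (u₁ + u₂ + u₃) ^ t * (v₁ + v₂ + v₃) ^ s := by
  set A := u₁ + u₂ + u₃ with hAdef
  set B := v₁ + v₂ + v₃ with hBdef
  have h1 := aux_term ht hs hts hu₁ hv₁ hA hB
  have h2 := aux_term ht hs hts hu₂ hv₂ hA hB
  have h3 := aux_term ht hs hts hu₃ hv₃ hA hB
  have hone : (t * (u₁ / A) + s * (v₁ / B)) + (t * (u₂ / A) + s * (v₂ / B))
      + (t * (u₃ / A) + s * (v₃ / B)) = 1 := by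
    field_simp
    rw [hAdef, hBdef]
    linear_combination ((u₁ + u₂ + u₃) * (v₁ + v₂ + v₃)) * hts
  have hsum : A ^ t * B ^ s * (t * (u₁ / A) + s * (v₁ / B))
      + A ^ t * B ^ s * (t * (u₂ / A) + s * (v₂ / B))
      + A ^ t * B ^ s * (t * (u₃ / A) + s * (v₃ / B)) = A ^ t * B ^ s := by
    calc A ^ t * B ^ s * (t * (u₁ / A) + s * (v₁ / B))
        + A ^ t * B ^ s * (t * (u₂ / A) + s * (v₂ / B))
        + A ^ t * B ^ s * (t * (u₃ / A) + s * (v₃ / B))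
        = A ^ t * B ^ s * ((t * (u₁ / A) + s * (v₁ / B)) + (t * (u₂ / A) + s * (v₂ / B))
            + (t * (u₃ / A) + s * (v₃ / B))) := by ring
      _ = A ^ t * B ^ s := by rw [hone, mul_one]
  linarith

lemma aux_pos {t s x₁ x₂ : ℝ} (ht : 0 ≤ t) (hs : 0 ≤ s) (hts : t + s = 1)
    (h1 : 0 < x₁) (h2 : 0 < x₂) : 0 < t * x₁ + s * x₂ := by
  rcases ht.eq_or_lt with h | h
  · have hs1 : s = 1 := by linarith
    rw [← h, hs1]; linarith
  · nlinarith [mul_pos h h1, mul_nonneg hs h2.le]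

/-- The function `f(x,y) = ln(1 + a/x + b/y)` is convex on the domain
`x > 0, y > 0`, for any constants `a > 0` and `b > 0`. -/
theorem stmt_0 (a b : ℝ) (ha : 0 < a) (hb : 0 < b) :
    ConvexOn ℝ {p : ℝ × ℝ | 0 < p.1 ∧ 0 < p.2}
      (fun p : ℝ × ℝ => Real.log (1 + a / p.1 + b / p.2)) := by
  constructor
  · rintro ⟨x₁, y₁⟩ ⟨hx₁, hy₁⟩ ⟨x₂, y₂⟩ ⟨hx₂, hy₂⟩ t s ht hs hts
    exact ⟨aux_pos ht hs hts hx₁ hx₂, aux_pos ht hs hts hy₁ hy₂⟩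
  · rintro ⟨x₁, y₁⟩ ⟨hx₁, hy₁⟩ ⟨x₂, y₂⟩ ⟨hx₂, hy₂⟩ t s ht hs hts
    simp only [Prod.smul_mk, Prod.mk_add_mk, smul_eq_mul]
    set X := t * x₁ + s * x₂ with hX
    set Y := t * y₁ + s * y₂ with hY
    have hXpos : 0 < X := aux_pos ht hs hts hx₁ hx₂
    have hYpos : 0 < Y := aux_pos ht hs hts hy₁ hy₂
    set A := 1 + a / x₁ + b / y₁ with hAdef
    set B := 1 + a / x₂ + b / y₂ with hBdef
    have hApos : 0 < A := by positivity
    have hBpos : 0 < B := by positivity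
    -- core inequality
    have hx : x₁ ^ t * x₂ ^ s ≤ X := by
      simpa [hX] using Real.geom_mean_le_arith_mean2_weighted ht hs hx₁.le hx₂.le hts
    have hy : y₁ ^ t * y₂ ^ s ≤ Y := by
      simpa [hY] using Real.geom_mean_le_arith_mean2_weighted ht hs hy₁.le hy₂.le hts
    have hxpow : 0 < x₁ ^ t * x₂ ^ s := by
      positivity
    have hypow : 0 < y₁ ^ t * y₂ ^ s := by
      positivity
    have ha2 : (a / x₁) ^ t * (a / x₂) ^ s = a / (x₁ ^ t * x₂ ^ s) := by
      rw [Real.div_rpow ha.le hx₁.le, Real.div_rpow ha.le hx₂.le,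
        div_mul_div_comm, ← Real.rpow_add ha, hts, Real.rpow_one]
    have hb2 : (b / y₁) ^ t * (b / y₂) ^ s = b / (y₁ ^ t * y₂ ^ s) := by
      rw [Real.div_rpow hb.le hy₁.le, Real.div_rpow hb.le hy₂.le,
        div_mul_div_comm, ← Real.rpow_add hb, hts, Real.rpow_one]
    have key : 1 + a / X + b / Y ≤ A ^ t * B ^ s := by
      have h1 : a / X ≤ (a / x₁) ^ t * (a / x₂) ^ s := by
        rw [ha2]
        exact div_le_div_of_nonneg_left ha.le hxpow hx
      have h2 : b / Y ≤ (b / y₁) ^ t * (b / y₂) ^ s := by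
        rw [hb2]
        exact div_le_div_of_nonneg_left hb.le hypow hy
      have h3 : (1:ℝ) ^ t * (1:ℝ) ^ s + (a / x₁) ^ t * (a / x₂) ^ s
          + (b / y₁) ^ t * (b / y₂) ^ s ≤ A ^ t * B ^ s := by
        exact aux_holder3 ht hs hts (by norm_num) (by positivity) (by positivity)
          (by norm_num) (by positivity) (by positivity) hApos hBpos
      have h0 : (1:ℝ) ^ t * (1:ℝ) ^ s = 1 := by
        rw [Real.one_rpow, Real.one_rpow, mul_one]
      linarith [h1, h2, h3, h0.ge, h0.le]
    calc Real.log (1 + a / X + b / Y) ≤ Real.log (A ^ t * B ^ s) :=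
          Real.log_le_log (by positivity) key
      _ = t * Real.log A + s * Real.log B := by
          rw [Real.log_mul (by positivity) (by positivity),
            Real.log_rpow hApos, Real.log_rpow hBpos]
end

section
/- The Hessian of f(x,y) = ln(1 + a/x + b/y) at any point (x,y) with x, y > 0 equals (1/u²) · [[2a y²/x + a²y²/x² + 2aby/x, −ab], [−ab, 2b x²/y + b²x²/y² + 2abx/y]], where u = xy + ay + bx, and this matrix is positive definite. -/
theorem dlog_aux (c b s : ℝ) (hb : 0 < b) (hc : 0 < c) (hs : 0 < s) :
    deriv (fun t : ℝ => Real.log (c + b / t)) s = -(b / s ^ 2) / (c + b / s) := by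
  have h1 : HasDerivAt (fun t : ℝ => c + b / t) (-(b / s ^ 2)) s := by
    have h := ((hasDerivAt_inv (ne_of_gt hs)).const_mul b).const_add c
    simpa [div_eq_mul_inv, mul_comm, neg_mul, mul_neg] using h
  have hpos : 0 < c + b / s := by positivity
  exact (h1.log (ne_of_gt hpos)).deriv

theorem posdef_aux (M : Matrix (Fin 2) (Fin 2) ℝ) (hA : 0 < M 0 0) (hs : M 0 1 = M 1 0)
    (hd : 0 < M 0 0 * M 1 1 - M 0 1 * M 1 0) : M.PosDef := by
  rw [hs] at hd
  rw [Matrix.posDef_iff_dotProduct_mulVec]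
  constructor
  · ext i j
    fin_cases i <;> fin_cases j <;> simp [Matrix.IsHermitian, Matrix.conjTranspose, hs]
  · intro v hv
    have h0 : v 0 ≠ 0 ∨ v 1 ≠ 0 := by
      by_contra h
      push_neg at h
      exact hv (funext fun i => by fin_cases i <;> simp [h.1, h.2])
    have hC : 0 < M 1 1 := by
      by_contra h
      push_neg at h
      nlinarith [mul_nonpos_of_nonneg_of_nonpos hA.le h, sq_nonneg (M 1 0)]
    simp [dotProduct, Matrix.mulVec, Fin.sum_univ_two, hs]
    rcases h0 with h | h
    · have : 0 < v 0 ^ 2 := pow_pos (abs_pos.mpr h) 2 |>.trans_eq (sq_abs _)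
      nlinarith [sq_nonneg (M 1 0 * v 0 + M 1 1 * v 1), mul_pos hd this, hC]
    · have : 0 < v 1 ^ 2 := pow_pos (abs_pos.mpr h) 2 |>.trans_eq (sq_abs _)
      nlinarith [sq_nonneg (M 0 0 * v 0 + M 1 0 * v 1), mul_pos hd this, hA]

/-- The Hessian of `f(x,y) = ln(1 + a/x + b/y)` at any point `(x,y)` with
`x, y > 0` equals `(1/u²) · [[2a y²/x + a²y²/x² + 2aby/x, −ab], [−ab,
2b x²/y + b²x²/y² + 2abx/y]]` where `u = xy + ay + bx`, and this matrix is
positive definite. -/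
theorem stmt_3 (a b x y : ℝ) (ha : 0 < a) (hb : 0 < b) (hx : 0 < x) (hy : 0 < y) :
    (deriv (fun s : ℝ => deriv (fun t : ℝ => Real.log (1 + a / t + b / y)) s) x =
        (1 / (x * y + a * y + b * x) ^ 2) *
          (2 * a * y ^ 2 / x + a ^ 2 * y ^ 2 / x ^ 2 + 2 * a * b * y / x) ∧
      deriv (fun s : ℝ => deriv (fun t : ℝ => Real.log (1 + a / x + b / t)) s) y =
        (1 / (x * y + a * y + b * x) ^ 2) *
          (2 * b * x ^ 2 / y + b ^ 2 * x ^ 2 / y ^ 2 + 2 * a * b * x / y) ∧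
      deriv (fun s : ℝ => deriv (fun t : ℝ => Real.log (1 + a / s + b / t)) y) x =
        (1 / (x * y + a * y + b * x) ^ 2) * (-(a * b)) ∧
      deriv (fun t : ℝ => deriv (fun s : ℝ => Real.log (1 + a / s + b / t)) x) y =
        (1 / (x * y + a * y + b * x) ^ 2) * (-(a * b))) ∧
    Matrix.PosDef
      ((1 / (x * y + a * y + b * x) ^ 2) •
        !![2 * a * y ^ 2 / x + a ^ 2 * y ^ 2 / x ^ 2 + 2 * a * b * y / x, -(a * b);
           -(a * b), 2 * b * x ^ 2 / y + b ^ 2 * x ^ 2 / y ^ 2 + 2 * a * b * x / y]) := by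
  have hu : 0 < x * y + a * y + b * x := by positivity
  constructor
  · refine ⟨?_, ?_, ?_, ?_⟩
    · -- f_xx
      have hev : (fun s : ℝ => deriv (fun t : ℝ => Real.log (1 + a / t + b / y)) s) =ᶠ[nhds x]
          (fun s : ℝ => -(a * y) / (s * (s * y + a * y + b * s))) := by
        filter_upwards [Ioi_mem_nhds hx] with s hs
        have hs : (0:ℝ) < s := hs
        have hfun : (fun t : ℝ => Real.log (1 + a / t + b / y))
            = fun t : ℝ => Real.log ((1 + b / y) + a / t) := by
          funext t; ring_nf
        rw [hfun, dlog_aux (1 + b / y) a s ha (by positivity) hs,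
]
        rw [div_eq_div_iff (by positivity) (by positivity)]
        field_simp
        ring
      rw [hev.deriv_eq]
      have hden : HasDerivAt (fun s : ℝ => s * (s * y + a * y + b * s))
          (1 * (x * y + a * y + b * x) + x * (y + b)) x := by
        have h2 : HasDerivAt (fun s : ℝ => s * y + a * y + b * s) (y + b) x := by
          simpa [Pi.add_def] using (((hasDerivAt_id x).mul_const y).add_const (a * y)).add
            ((hasDerivAt_id x).const_mul b)
        exact (hasDerivAt_id x).mul h2
      have h := (hasDerivAt_const x (-(a * y))).div hden (ne_of_gt (by positivity))
      erw [h.deriv]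
      rw [div_eq_iff (by positivity)]
      field_simp
      ring
    · -- f_yy
      have hev : (fun s : ℝ => deriv (fun t : ℝ => Real.log (1 + a / x + b / t)) s) =ᶠ[nhds y]
          (fun s : ℝ => -(b * x) / (s * (x * s + a * s + b * x))) := by
        filter_upwards [Ioi_mem_nhds hy] with s hs
        have hs : (0:ℝ) < s := hs
        have hfun : (fun t : ℝ => Real.log (1 + a / x + b / t))
            = fun t : ℝ => Real.log ((1 + a / x) + b / t) := by
          funext t; ring_nf
        rw [hfun, dlog_aux (1 + a / x) b s hb (by positivity) hs,
]
        rw [div_eq_div_iff (by positivity) (by positivity)]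
        field_simp
      rw [hev.deriv_eq]
      have hden : HasDerivAt (fun s : ℝ => s * (x * s + a * s + b * x))
          (1 * (x * y + a * y + b * x) + y * (x + a)) y := by
        have h2 : HasDerivAt (fun s : ℝ => x * s + a * s + b * x) (x + a) y := by
          simpa [Pi.add_def] using (((hasDerivAt_id y).const_mul x).add
            ((hasDerivAt_id y).const_mul a)).add_const (b * x)
        have := (hasDerivAt_id y).mul h2
        simpa [Pi.mul_def] using this
      have h := (hasDerivAt_const y (-(b * x))).div hden (ne_of_gt (by positivity))
      erw [h.deriv]
      rw [div_eq_iff (by positivity)]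
      field_simp
      ring
    · -- f_xy
      have hev : (fun s : ℝ => deriv (fun t : ℝ => Real.log (1 + a / s + b / t)) y) =ᶠ[nhds x]
          (fun s : ℝ => -(b * s) / (y * (s * y + a * y + b * s))) := by
        filter_upwards [Ioi_mem_nhds hx] with s hs
        have hs : (0:ℝ) < s := hs
        have hfun : (fun t : ℝ => Real.log (1 + a / s + b / t))
            = fun t : ℝ => Real.log ((1 + a / s) + b / t) := by
          funext t; ring_nf
        rw [hfun, dlog_aux (1 + a / s) b y hb (by positivity) hy,
]
        rw [div_eq_div_iff (by positivity) (by positivity)]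
        field_simp
      rw [hev.deriv_eq]
      have hnum : HasDerivAt (fun s : ℝ => -(b * s)) (-b) x := by
        simpa [Pi.neg_def] using ((hasDerivAt_id x).const_mul b).neg
      have hden : HasDerivAt (fun s : ℝ => y * (s * y + a * y + b * s))
          (y * (y + b)) x := by
        have h2 : HasDerivAt (fun s : ℝ => s * y + a * y + b * s) (y + b) x := by
          simpa [Pi.add_def] using (((hasDerivAt_id x).mul_const y).add_const (a * y)).add
            ((hasDerivAt_id x).const_mul b)
        simpa using h2.const_mul y
      have h := hnum.div hden (ne_of_gt (by positivity))
      erw [h.deriv]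
      rw [div_eq_iff (by positivity)]
      field_simp
      ring
    · -- f_yx
      have hev : (fun t : ℝ => deriv (fun s : ℝ => Real.log (1 + a / s + b / t)) x) =ᶠ[nhds y]
          (fun t : ℝ => -(a * t) / (x * (x * t + a * t + b * x))) := by
        filter_upwards [Ioi_mem_nhds hy] with t ht
        have ht : (0:ℝ) < t := ht
        have hfun : (fun s : ℝ => Real.log (1 + a / s + b / t))
            = fun s : ℝ => Real.log ((1 + b / t) + a / s) := by
          funext s; ring_nf
        rw [hfun, dlog_aux (1 + b / t) a x ha (by positivity) hx,
]
        rw [div_eq_div_iff (by positivity) (by positivity)]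
        field_simp
        ring
      rw [hev.deriv_eq]
      have hnum : HasDerivAt (fun t : ℝ => -(a * t)) (-a) y := by
        simpa [Pi.neg_def] using ((hasDerivAt_id y).const_mul a).neg
      have hden : HasDerivAt (fun t : ℝ => x * (x * t + a * t + b * x))
          (x * (x + a)) y := by
        have h2 : HasDerivAt (fun t : ℝ => x * t + a * t + b * x) (x + a) y := by
          simpa [Pi.add_def] using (((hasDerivAt_id y).const_mul x).add
            ((hasDerivAt_id y).const_mul a)).add_const (b * x)
        simpa using h2.const_mul x
      have h := hnum.div hden (ne_of_gt (by positivity))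
      erw [h.deriv]
      rw [div_eq_iff (by positivity)]
      field_simp
      ring
  · -- positive definite
    apply posdef_aux
    · simp [Matrix.smul_apply]
      positivity
    · simp [Matrix.smul_apply]
    · have key : 0 < (2 * a * y ^ 2 / x + a ^ 2 * y ^ 2 / x ^ 2 + 2 * a * b * y / x) *
          (2 * b * x ^ 2 / y + b ^ 2 * x ^ 2 / y ^ 2 + 2 * a * b * x / y) - (a * b) * (a * b) := by
        have e : (2 * a * y ^ 2 / x + a ^ 2 * y ^ 2 / x ^ 2 + 2 * a * b * y / x) *
            (2 * b * x ^ 2 / y + b ^ 2 * x ^ 2 / y ^ 2 + 2 * a * b * x / y) - (a * b) * (a * b)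
            = ((2 * a * y ^ 2 * x + a ^ 2 * y ^ 2 + 2 * a * b * y * x) *
              (2 * b * x ^ 2 * y + b ^ 2 * x ^ 2 + 2 * a * b * x * y)
              - a ^ 2 * b ^ 2 * x ^ 2 * y ^ 2) / (x ^ 2 * y ^ 2) := by
          field_simp
        rw [e]
        apply div_pos ?_ (by positivity)
        have expand : (2 * a * y ^ 2 * x + a ^ 2 * y ^ 2 + 2 * a * b * y * x) *
            (2 * b * x ^ 2 * y + b ^ 2 * x ^ 2 + 2 * a * b * x * y)
            - a ^ 2 * b ^ 2 * x ^ 2 * y ^ 2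
            = 4*a*b*x^3*y^3 + 6*a*b^2*x^3*y^2 + 6*a^2*b*x^2*y^3 + 2*a^3*b*x*y^3
              + 2*a*b^3*x^3*y + 4*a^2*b^2*x^2*y^2 := by ring
        rw [expand]
        positivity
      simp [Matrix.smul_apply]
      have hinv : (0:ℝ) < ((x * y + a * y + b * x) ^ 2)⁻¹ := by positivity
      nlinarith [mul_pos (mul_pos hinv hinv) key]
end

section
/- If X₁ and X₂ are independent exponential random variables with means Ω₁p and Ω₂q (p, q, Ω₁, Ω₂ > 0, Ω₁p ≠ Ω₂q), then as Ω₁ = c₁t, Ω₂ = c₂t with t → ∞ (c₁, c₂ fixed positive constants), t² · P(X₁ + X₂ < T) converges to T²/(2 p q c₁ c₂) for fixed T > 0. -/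
open MeasureTheory ProbabilityTheory Filter


open Real Set Topology in
private lemma expMeasure_Iio' {r : ℝ} (hr : 0 < r) (x : ℝ) :
    expMeasure r (Iio x) = ENNReal.ofReal (if 0 ≤ x then 1 - Real.exp (-(r * x)) else 0) := by
  have hsing : expMeasure r {x} = 0 := by
    rw [expMeasure, gammaMeasure, withDensity_apply _ (measurableSet_singleton x),
      Measure.restrict_singleton]
    simp
  have h1 : expMeasure r (Iio x) = expMeasure r (Iic x) :=
    measure_congr (Iio_ae_eq_Iic' hsing)
  rw [h1, expMeasure, gammaMeasure, withDensity_apply _ measurableSet_Iic]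
  exact lintegral_exponentialPDF_eq_antiDeriv hr x

open Real Set Topology in
private lemma interval_int {r₁ r₂ T : ℝ} (hne : r₁ ≠ r₂) :
    ∫ x in (0)..T, r₁ * Real.exp (-(r₁ * x)) * (1 - Real.exp (-(r₂ * (T - x))))
      = 1 - Real.exp (-(r₁ * T)) -
        r₁ * (Real.exp (-(r₁ * T)) - Real.exp (-(r₂ * T))) / (r₂ - r₁) := by
  have hd : r₂ - r₁ ≠ 0 := sub_ne_zero.mpr (Ne.symm hne)
  set c : ℝ := r₁ * Real.exp (-(r₂ * T)) / (r₂ - r₁) with hc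
  set H : ℝ → ℝ := fun x => -Real.exp (-(r₁ * x)) - c * Real.exp ((r₂ - r₁) * x) with hH
  have hderiv : ∀ x ∈ uIcc (0:ℝ) T,
      HasDerivAt H (r₁ * Real.exp (-(r₁ * x)) * (1 - Real.exp (-(r₂ * (T - x))))) x := by
    intro x _
    have d1 : HasDerivAt (fun y : ℝ => Real.exp (-(r₁ * y))) (Real.exp (-(r₁ * x)) * (-r₁)) x :=
      HasDerivAt.exp (by simpa using ((hasDerivAt_id x).const_mul r₁).fun_neg)
    have d2 : HasDerivAt (fun y : ℝ => Real.exp ((r₂ - r₁) * y))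
        (Real.exp ((r₂ - r₁) * x) * (r₂ - r₁)) x :=
      HasDerivAt.exp (by simpa using (hasDerivAt_id x).const_mul (r₂ - r₁))
    have := (d1.fun_neg).fun_sub (d2.const_mul c)
    refine this.congr_deriv ?_; symm
    have key : Real.exp (-(r₂ * T)) * Real.exp ((r₂ - r₁) * x)
        = Real.exp (-(r₁ * x)) * Real.exp (-(r₂ * (T - x))) := by
      rw [← Real.exp_add, ← Real.exp_add]; ring_nf
    rw [hc]
    field_simp
    rw [mul_comm x (r₂ - r₁)]; linear_combination r₁ * key
  have hcont : Continuous
      (fun x => r₁ * Real.exp (-(r₁ * x)) * (1 - Real.exp (-(r₂ * (T - x))))) := by fun_prop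
  rw [intervalIntegral.integral_eq_sub_of_hasDerivAt hderiv (hcont.intervalIntegrable 0 T)]
  have key : Real.exp (-(r₂ * T)) * Real.exp ((r₂ - r₁) * T) = Real.exp (-(r₁ * T)) := by
    rw [← Real.exp_add]; ring_nf
  simp only [hH, hc]
  field_simp
  simp only [mul_zero, neg_zero, Real.exp_zero, mul_assoc, ← Real.exp_add]; ring_nf

open Real Set Topology in
private lemma prod_sum_lt {r₁ r₂ T : ℝ} (h1 : 0 < r₁) (h2 : 0 < r₂) (hne : r₁ ≠ r₂) (hT : 0 < T) :
    (((expMeasure r₁).prod (expMeasure r₂)) {z : ℝ × ℝ | z.1 + z.2 < T}).toReal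
      = 1 - Real.exp (-(r₁ * T)) -
        r₁ * (Real.exp (-(r₁ * T)) - Real.exp (-(r₂ * T))) / (r₂ - r₁) := by
  haveI := isProbabilityMeasure_expMeasure h2
  have hS : MeasurableSet {z : ℝ × ℝ | z.1 + z.2 < T} :=
    measurableSet_lt (by fun_prop) measurable_const
  set g : ℝ → ℝ := fun x => if 0 ≤ T - x then 1 - Real.exp (-(r₂ * (T - x))) else 0 with hg
  have hmg : Measurable g := by
    apply Measurable.ite
    · exact measurableSet_le measurable_const (by fun_prop)
    · fun_prop
    · fun_prop
  set h : ℝ → ℝ := fun x => r₁ * Real.exp (-(r₁ * x)) * (1 - Real.exp (-(r₂ * (T - x)))) with hh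
  have hch : Continuous h := by fun_prop
  have hnonneg : ∀ x ∈ Ioc (0:ℝ) T, 0 ≤ h x := by
    intro x hx
    apply mul_nonneg (by positivity)
    have : Real.exp (-(r₂ * (T - x))) ≤ 1 :=
      Real.exp_le_one_iff.mpr (by nlinarith [hx.2])
    linarith
  have step1 : ((expMeasure r₁).prod (expMeasure r₂)) {z : ℝ × ℝ | z.1 + z.2 < T}
      = ∫⁻ x, exponentialPDF r₁ x * ENNReal.ofReal (g x) := by
    rw [Measure.prod_apply hS]
    have hfib : ∀ x : ℝ, expMeasure r₂ (Prod.mk x ⁻¹' {z : ℝ × ℝ | z.1 + z.2 < T})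
        = ENNReal.ofReal (g x) := by
      intro x
      have : Prod.mk x ⁻¹' {z : ℝ × ℝ | z.1 + z.2 < T} = Iio (T - x) := by
        ext y; simp [lt_sub_iff_add_lt']
      rw [this, expMeasure_Iio' h2]
    simp_rw [hfib]
    rw [show expMeasure r₁ = volume.withDensity (exponentialPDF r₁) from rfl]
    rw [lintegral_withDensity_eq_lintegral_mul _
      (show Measurable (exponentialPDF r₁) from (measurable_gammaPDFReal 1 r₁).ennreal_ofReal)
      hmg.ennreal_ofReal]
    rfl
  have hsupp : Function.support (fun x => exponentialPDF r₁ x * ENNReal.ofReal (g x))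
      ⊆ Icc 0 T := by
    intro x hx
    simp only [Function.mem_support, ne_eq, mul_eq_zero, not_or] at hx
    constructor
    · by_contra hx0
      exact hx.1 (exponentialPDF_of_neg (lt_of_not_ge hx0))
    · by_contra hxT
      apply hx.2
      rw [hg]
      simp only
      rw [if_neg (by push_neg at hxT ⊢; linarith : ¬ (0 ≤ T - x))]
      simp
  have e1 : (∫⁻ x, exponentialPDF r₁ x * ENNReal.ofReal (g x))
      = ∫⁻ x in Icc 0 T, exponentialPDF r₁ x * ENNReal.ofReal (g x) :=
    (setLIntegral_eq_of_support_subset hsupp).symm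
  have e2 : (∫⁻ x in Icc 0 T, exponentialPDF r₁ x * ENNReal.ofReal (g x))
      = ∫⁻ x in Ioc 0 T, exponentialPDF r₁ x * ENNReal.ofReal (g x) := by
    rw [Measure.restrict_congr_set Ioc_ae_eq_Icc]
  have e3 : (∫⁻ x in Ioc 0 T, exponentialPDF r₁ x * ENNReal.ofReal (g x))
      = ∫⁻ x in Ioc 0 T, ENNReal.ofReal (h x) := by
    apply setLIntegral_congr_fun measurableSet_Ioc
    intro x hx
    beta_reduce
    rw [exponentialPDF_of_nonneg hx.1.le, hg, hh]
    simp only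
    rw [if_pos (by linarith [hx.2] : (0:ℝ) ≤ T - x)]
    rw [← ENNReal.ofReal_mul (by positivity)]
  have hint : IntegrableOn h (Ioc 0 T) := (hch.integrableOn_Icc).mono_set Ioc_subset_Icc_self
  have e4 : (∫⁻ x in Ioc 0 T, ENNReal.ofReal (h x))
      = ENNReal.ofReal (∫ x in Ioc 0 T, h x) := by
    rw [← ofReal_integral_eq_lintegral_ofReal hint
      ((ae_restrict_iff' measurableSet_Ioc).mpr (ae_of_all _ hnonneg))]
  have e5 : (∫ x in Ioc 0 T, h x) = ∫ x in (0)..T, h x :=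
    (intervalIntegral.integral_of_le hT.le).symm
  rw [step1, e1, e2, e3, e4, ENNReal.toReal_ofReal
    (setIntegral_nonneg measurableSet_Ioc hnonneg), e5, hh, interval_int hne]

open Real Set Topology in
private lemma exp_quad_lim : Tendsto (fun x : ℝ => (Real.exp x - 1 - x) / x ^ 2)
    (𝓝[≠] (0:ℝ)) (𝓝 (1/2)) := by
  rw [← tendsto_sub_nhds_zero_iff]
  have htend : Tendsto (fun x : ℝ => (2/9) * |x|) (𝓝[≠] (0:ℝ)) (𝓝 0) := by
    have : Tendsto (fun x : ℝ => (2/9) * |x|) (𝓝 0) (𝓝 0) := by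
      simpa using (continuous_abs.tendsto 0).const_mul (2/9 : ℝ)
    exact this.mono_left nhdsWithin_le_nhds
  refine squeeze_zero_norm' ?_ htend
  filter_upwards [eventually_nhdsWithin_of_eventually_nhds
    (eventually_abs_sub_lt 0 one_pos), eventually_mem_nhdsWithin] with x hx1 hx0
  have hx0 : x ≠ 0 := hx0
  have hb := Real.exp_bound (x := x) (by simpa using hx1.le) (n := 3) (by norm_num)
  have hsum : ∑ i ∈ Finset.range 3, x ^ i / (Nat.factorial i : ℝ) = 1 + x + x ^ 2 / 2 := by
    norm_num [Finset.sum_range_succ, Nat.factorial]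
  rw [hsum] at hb
  have hx2 : (0:ℝ) < x ^ 2 := by positivity
  have heq : (Real.exp x - 1 - x) / x ^ 2 - 1 / 2
      = (Real.exp x - (1 + x + x ^ 2 / 2)) / x ^ 2 := by
    field_simp; ring
  rw [heq, Real.norm_eq_abs, abs_div, abs_of_pos hx2, div_le_iff₀ hx2]
  refine hb.trans (le_of_eq ?_)
  have h3 : |x| ^ 3 = x ^ 2 * |x| := by rw [← sq_abs]; ring
  rw [h3]
  norm_num [Nat.factorial]
  ring

open Real Set Topology in
private lemma phi_lim : Tendsto (fun x : ℝ => (Real.exp (-x) - 1 + x) / x ^ 2)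
    (𝓝[>] (0:ℝ)) (𝓝 (1/2)) := by
  have hmap : Tendsto (fun x : ℝ => -x) (𝓝[>] (0:ℝ)) (𝓝[≠] (0:ℝ)) := by
    rw [tendsto_nhdsWithin_iff]
    constructor
    · exact (continuous_neg.tendsto' (0:ℝ) 0 (by simp)).mono_left nhdsWithin_le_nhds
    · filter_upwards [self_mem_nhdsWithin] with x hx
      exact neg_ne_zero.mpr (ne_of_gt hx)
  have := exp_quad_lim.comp hmap
  apply this.congr
  intro x
  simp only [Function.comp]
  rw [neg_sq]
  ring_nf


open Real Set Topology

/-- If `X₁` and `X₂` are independent exponential random variables with means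
`Ω₁p` and `Ω₂q` (`p, q, Ω₁, Ω₂ > 0`, `Ω₁p ≠ Ω₂q`), then as `Ω₁ = c₁t`,
`Ω₂ = c₂t` with `t → ∞` (`c₁, c₂` fixed positive constants),
`t² · P(X₁ + X₂ < T)` converges to `T²/(2 p q c₁ c₂)` for fixed `T > 0`.
Independence is modeled by the product of the two exponential laws. -/
theorem stmt_10 (p q c₁ c₂ T : ℝ) (hp : 0 < p) (hq : 0 < q)
    (hc₁ : 0 < c₁) (hc₂ : 0 < c₂) (hT : 0 < T) (hne : c₁ * p ≠ c₂ * q) :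
    Tendsto
      (fun t : ℝ => t ^ 2 *
        (((expMeasure (1 / (c₁ * t * p))).prod (expMeasure (1 / (c₂ * t * q))))
          {z : ℝ × ℝ | z.1 + z.2 < T}).toReal)
      atTop (nhds (T ^ 2 / (2 * p * q * c₁ * c₂))) := by
  have ha : (0:ℝ) < c₁ * p := by positivity
  have hb : (0:ℝ) < c₂ * q := by positivity
  have hab : c₁ * p - c₂ * q ≠ 0 := sub_ne_zero.mpr hne
  set φ : ℝ → ℝ := fun x => (Real.exp (-x) - 1 + x) / x ^ 2 with hφ
  set G : ℝ → ℝ := fun t =>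
    T ^ 2 * ((φ (T / (c₂ * q * t)) / (c₂ * q) - φ (T / (c₁ * p * t)) / (c₁ * p))
      / (c₁ * p - c₂ * q)) with hG
  have hGlim : Tendsto G atTop (𝓝 (T ^ 2 / (2 * p * q * c₁ * c₂))) := by
    have hx : ∀ d : ℝ, 0 < d → Tendsto (fun t : ℝ => T / (d * t)) atTop (𝓝[>] (0:ℝ)) := by
      intro d hd
      rw [tendsto_nhdsWithin_iff]
      constructor
      · exact Tendsto.div_atTop tendsto_const_nhds (Tendsto.const_mul_atTop hd tendsto_id)
      · filter_upwards [eventually_gt_atTop (0:ℝ)] with t ht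
        have : (0:ℝ) < d * t := by positivity
        exact div_pos hT this
    have hφa : Tendsto (fun t : ℝ => φ (T / (c₁ * p * t))) atTop (𝓝 (1/2)) :=
      phi_lim.comp (hx _ ha)
    have hφb : Tendsto (fun t : ℝ => φ (T / (c₂ * q * t))) atTop (𝓝 (1/2)) :=
      phi_lim.comp (hx _ hb)
    have hcomb := (((hφb.div_const (c₂ * q)).sub (hφa.div_const (c₁ * p))).div_const
      (c₁ * p - c₂ * q)).const_mul (T ^ 2)
    have hval : T ^ 2 * ((1/2 / (c₂ * q) - 1/2 / (c₁ * p)) / (c₁ * p - c₂ * q))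
        = T ^ 2 / (2 * p * q * c₁ * c₂) := by
      field_simp
    rw [← hval]
    exact hcomb
  apply hGlim.congr'
  filter_upwards [eventually_gt_atTop (0:ℝ)] with t ht
  have ht0 : t ≠ 0 := ht.ne'
  have hr₁ : (0:ℝ) < 1 / (c₁ * t * p) := by positivity
  have hr₂ : (0:ℝ) < 1 / (c₂ * t * q) := by positivity
  have hner : 1 / (c₁ * t * p) ≠ 1 / (c₂ * t * q) := by
    intro h
    rw [div_eq_div_iff (by positivity) (by positivity)] at h
    apply hne
    have : (c₁ * p) * t = (c₂ * q) * t := by linarith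
    exact mul_right_cancel₀ ht0 this
  rw [prod_sum_lt hr₁ hr₂ hner hT]
  have hsub : 1 / (c₂ * t * q) - 1 / (c₁ * t * p) ≠ 0 := sub_ne_zero.mpr (Ne.symm hner)
  have ea : -(1 / (c₁ * t * p) * T) = -(T / (c₁ * p * t)) := by
    rw [div_mul_eq_mul_div, one_mul]
    ring_nf
  have eb : -(1 / (c₂ * t * q) * T) = -(T / (c₂ * q * t)) := by
    rw [div_mul_eq_mul_div, one_mul]
    ring_nf
  have hd : 1 / (c₂ * t * q) - 1 / (c₁ * t * p) = (c₁ * p - c₂ * q) / (c₁ * p * (c₂ * q) * t) := by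
    field_simp
  rw [ea, eb, hd, hG, hφ]
  simp only
  have hxa : T / (c₁ * p * t) ≠ 0 := by positivity
  have hxb : T / (c₂ * q * t) ≠ 0 := by positivity
  field_simp
  ring
end
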